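/- Let C be a field and k_0, k_1, k_2, ... a sequence of elements of a field extension K of C. Suppose s ≥ 1 is the smallest positive integer for which there exists ξ ∈ C^s with k_s + k_{s-1}ξ_1 + ... + k_0 ξ_s = 0 (in particular no such relation exists for any smaller index, and k_0 ≠ 0 is not required but the sets H_i for i < s are empty). Then the set H_s = {ξ ∈ C^s : k_s + k_{s-1}ξ_1 + ... + k_0 ξ_s = 0} contains exactly one element. -/

import Mathlib

/-- let `C ⊆ K` be fields and `k₀, k₁, k₂, …` a sequence in `K`.
Define `H_n = {ξ ∈ Cⁿ : k_n + k_{n-1}ξ₁ + ⋯ + k₀ξ_n = 0}`.  If `s ≥ 1` is the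
smallest index with `H_s ≠ ∅` (so `H_m = ∅` for every `m < s`, in particular
`k₀ ≠ 0` as `H_0 = ∅`), then `H_s` contains exactly one element. -/
theorem basic_constants_unique {K : Type*} [Field K] (C : Subfield K) (k : ℕ → K)
    (s : ℕ) (hs : 1 ≤ s)
    (hempty : ∀ m, m < s →
      ¬∃ ξ : Fin m → K, (∀ i, ξ i ∈ C) ∧
        k m + ∑ i : Fin m, k (m - 1 - (i : ℕ)) * ξ i = 0)
    (hne : ∃ ξ : Fin s → K, (∀ i, ξ i ∈ C) ∧
        k s + ∑ i : Fin s, k (s - 1 - (i : ℕ)) * ξ i = 0) :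
    ∃! ξ : Fin s → K, (∀ i, ξ i ∈ C) ∧
        k s + ∑ i : Fin s, k (s - 1 - (i : ℕ)) * ξ i = 0 := by
  classical
  obtain ⟨ξ, hξC, hξ⟩ := hne
  refine ⟨ξ, ⟨hξC, hξ⟩, ?_⟩
  rintro η ⟨hηC, hη⟩
  by_contra hne'
  have hex : ∃ i : Fin s, η i ≠ ξ i := by
    by_contra h
    push_neg at h
    exact hne' (funext h)
  let T : Finset (Fin s) := Finset.univ.filter fun i => η i ≠ ξ i
  have hT : T.Nonempty := by obtain ⟨i, hi⟩ := hex; exact ⟨i, by simp [T, hi]⟩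
  set i0 := T.min' hT with hi0def
  have hi0 : η i0 ≠ ξ i0 := by have := T.min'_mem hT; simpa [T] using this
  have hmin : ∀ i : Fin s, i < i0 → η i = ξ i := by
    intro i hi
    by_contra h
    exact absurd (T.min'_le i (by simp [T, h])) (not_le.mpr hi)
  set n0 := (i0 : ℕ) with hn0
  have hn0s : n0 < s := i0.isLt
  set m := s - n0 - 1 with hm
  set D : ℕ → K := fun i => if h : i < s then η ⟨i, h⟩ - ξ ⟨i, h⟩ else 0 with hD
  have hDn0 : D n0 ≠ 0 := by
    simp only [hD, dif_pos hn0s]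
    intro h
    exact hi0 (by rwa [sub_eq_zero, Fin.eta] at h)
  have hsum : ∑ i ∈ Finset.range s, k (s - 1 - i) * D i = 0 := by
    rw [← Fin.sum_univ_eq_sum_range (fun i => k (s - 1 - i) * D i) s]
    have h1 : ∑ i : Fin s, k (s - 1 - (i : ℕ)) * D i
        = (k s + ∑ i : Fin s, k (s - 1 - (i : ℕ)) * η i)
          - (k s + ∑ i : Fin s, k (s - 1 - (i : ℕ)) * ξ i) := by
      rw [add_sub_add_left_eq_sub, ← Finset.sum_sub_distrib]
      refine Finset.sum_congr rfl fun i _ => ?_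
      simp [hD, i.isLt, mul_sub]
    rw [h1, hξ, hη]; ring
  have hzero : ∀ i ∈ Finset.range n0, k (s - 1 - i) * D i = 0 := by
    intro i hi
    simp only [Finset.mem_range] at hi
    have his : i < s := lt_trans hi hn0s
    have : (⟨i, his⟩ : Fin s) < i0 := by
      rw [Fin.lt_def]; exact hi
    simp [hD, dif_pos his, hmin _ this]
  have hsplit : k (s - 1 - n0) * D n0 + ∑ i ∈ Finset.Ico (n0 + 1) s, k (s - 1 - i) * D i = 0 := by
    have e1 : ∑ i ∈ Finset.range s, k (s - 1 - i) * D i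
        = ∑ i ∈ Finset.range n0, k (s - 1 - i) * D i
          + ∑ i ∈ Finset.Ico n0 s, k (s - 1 - i) * D i := by
      rw [Finset.range_eq_Ico, ← Finset.sum_Ico_consecutive _ (Nat.zero_le n0) (le_of_lt hn0s), Finset.range_eq_Ico]
    have e2 : ∑ i ∈ Finset.Ico n0 s, k (s - 1 - i) * D i
        = k (s - 1 - n0) * D n0 + ∑ i ∈ Finset.Ico (n0 + 1) s, k (s - 1 - i) * D i :=
      Finset.sum_eq_sum_Ico_succ_bot hn0s _
    rw [e1, Finset.sum_eq_zero hzero, zero_add, e2] at hsum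
    exact hsum
  -- build element of H_m
  refine hempty m (by omega) ⟨fun j => D (n0 + 1 + j) / D n0, fun j => ?_, ?_⟩
  · have hjs : n0 + 1 + (j : ℕ) < s := by have := j.isLt; omega
    simp only [hD, dif_pos hjs, dif_pos hn0s]
    exact C.div_mem (C.sub_mem (hηC _) (hξC _)) (C.sub_mem (hηC _) (hξC _))
  · have e3 : ∑ i ∈ Finset.Ico (n0 + 1) s, k (s - 1 - i) * D i
        = ∑ j ∈ Finset.range m, k (s - 1 - (n0 + 1 + j)) * D (n0 + 1 + j) := by
      rw [Finset.sum_Ico_eq_sum_range]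
      refine Finset.sum_congr (by rw [hm, Nat.sub_sub]) fun j _ => by ring_nf
    have e4 : ∑ j : Fin m, k (m - 1 - (j : ℕ)) * (D (n0 + 1 + (j : ℕ)) / D n0)
        = (∑ i ∈ Finset.Ico (n0 + 1) s, k (s - 1 - i) * D i) / D n0 := by
      rw [e3, Finset.sum_div,
        Fin.sum_univ_eq_sum_range (fun j => k (m - 1 - j) * (D (n0 + 1 + j) / D n0)) m]
      refine Finset.sum_congr rfl fun j hj => ?_
      simp only [Finset.mem_range] at hj
      have : m - 1 - j = s - 1 - (n0 + 1 + j) := by omega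
      rw [this, mul_div_assoc]
    rw [e4]
    have hkm : k m = k (s - 1 - n0) := by congr 1; omega
    rw [hkm]
    field_simp
    linear_combination hsplit
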